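/- The function u ↦ u + u(1−u)·log(u⁻¹ − 1) is strictly increasing on the interval (0,1). -/

import Mathlib

open Set Real

theorem strictMonoOn_aux :
    StrictMonoOn (fun u : ℝ => u + u * (1 - u) * Real.log (u⁻¹ - 1))
      (Set.Ioo (0 : ℝ) 1) := by
  set f : ℝ → ℝ := fun u => u + u * (1 - u) * Real.log (u⁻¹ - 1) with hf
  have key : ∀ u ∈ Set.Ioo (0:ℝ) 1,
      HasDerivAt f ((1 - 2*u) * Real.log (u⁻¹ - 1)) u := by
    intro u hu
    have hu0 : (0:ℝ) < u := hu.1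
    have hu1 : u < 1 := hu.2
    have hne : u ≠ 0 := hu0.ne'
    have hpos : 0 < u⁻¹ - 1 := by
      nlinarith [mul_inv_cancel₀ hne, mul_pos (sub_pos.mpr hu1) (inv_pos.mpr hu0)]
    have h1 : HasDerivAt (fun u:ℝ => u⁻¹ - 1) (-(u^2)⁻¹) u :=
      (hasDerivAt_inv hne).sub_const 1
    have h2 : HasDerivAt (fun u:ℝ => Real.log (u⁻¹ - 1)) (-(u^2)⁻¹ / (u⁻¹ - 1)) u :=
      h1.log hpos.ne'
    have h3 : HasDerivAt (fun u:ℝ => u * (1 - u)) (1 - 2*u) u := by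
      have := (hasDerivAt_id u).mul ((hasDerivAt_const u (1:ℝ)).sub (hasDerivAt_id u))
      refine this.congr_deriv ?_
      simp [id]
      ring
    have h5 := (hasDerivAt_id u).add (h3.mul h2)
    refine h5.congr_deriv ?_
    have hune : (1:ℝ) - u ≠ 0 := by linarith
    field_simp
    ring
  have mono1 : StrictMonoOn f (Ioc 0 (1/2)) := by
    apply strictMonoOn_of_deriv_pos (convex_Ioc _ _)
    · intro x hx
      exact (key x ⟨hx.1, by linarith [hx.2]⟩).continuousAt.continuousWithinAt
    · intro x hx
      rw [interior_Ioc] at hx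
      obtain ⟨hx0, hx2⟩ := hx
      have hxI : x ∈ Ioo (0:ℝ) 1 := ⟨hx0, by linarith⟩
      rw [(key x hxI).deriv]
      have hinv : 2 < x⁻¹ := by
        nlinarith [mul_inv_cancel₀ hx0.ne', mul_pos (sub_pos.mpr hx2) (inv_pos.mpr hx0)]
      have hL : 0 < Real.log (x⁻¹ - 1) := Real.log_pos (by linarith)
      exact mul_pos (by linarith) hL
  have mono2 : StrictMonoOn f (Ico (1/2) 1) := by
    apply strictMonoOn_of_deriv_pos (convex_Ico _ _)
    · intro x hx
      exact (key x ⟨by linarith [hx.1], hx.2⟩).continuousAt.continuousWithinAt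
    · intro x hx
      rw [interior_Ico] at hx
      obtain ⟨hx2, hx1⟩ := hx
      have hx0 : (0:ℝ) < x := by linarith
      have hxI : x ∈ Ioo (0:ℝ) 1 := ⟨hx0, hx1⟩
      rw [(key x hxI).deriv]
      have hpos : 0 < x⁻¹ - 1 := by
        nlinarith [mul_inv_cancel₀ hx0.ne', mul_pos (sub_pos.mpr hx1) (inv_pos.mpr hx0)]
      have hinv : x⁻¹ < 2 := by
        nlinarith [mul_inv_cancel₀ hx0.ne', mul_pos (sub_pos.mpr hx2) (inv_pos.mpr hx0)]
      have hL : Real.log (x⁻¹ - 1) < 0 := Real.log_neg (by linarith) (by linarith)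
      exact mul_pos_of_neg_of_neg (by linarith) hL
  intro x hx y hy hxy
  rcases le_or_gt y (1/2) with h | h
  · exact mono1 ⟨hx.1, by linarith⟩ ⟨hy.1, h⟩ hxy
  · rcases le_or_gt (1/2) x with h' | h'
    · exact mono2 ⟨h', hx.2⟩ ⟨h.le, hy.2⟩ hxy
    · exact (mono1 ⟨hx.1, h'.le⟩ ⟨by norm_num, le_refl _⟩ h').trans
        (mono2 ⟨le_refl _, by norm_num⟩ ⟨h.le, hy.2⟩ h)
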